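/- Let b ∈ ℝ, t₀ < t₁, γ > 0, ρ ≥ 0, let φ : ℝ → ℝ be continuous with φ(t) ≥ 0 for all t ∈ [t₀, t₁] and I := ∫_{t₀}^{t₁} φ(t) dt > 0, let c ≥ 1/(2γ²·I), and let b̄ : [t₀, t₁] → ℝ be continuous with |b̄(t) − b| ≤ ρ for all t ∈ [t₀, t₁]. If z̄ : [t₀, t₁] → ℝ is differentiable and satisfies z̄′(t) = c·(b̄(t) − z̄(t))³·φ(t) for all t ∈ [t₀, t₁], then |z̄(t₁) − b| < ρ + γ, regardless of the initial value z̄(t₀). -/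

import Mathlib

open intervalIntegral in
lemma perturbed_upper (b t₀ t₁ γ ρ c : ℝ) (φ bbar zbar : ℝ → ℝ)
    (ht : t₀ < t₁) (hγ : 0 < γ) (hρ : 0 ≤ ρ)
    (hφcont : Continuous φ) (hφpos : ∀ t ∈ Set.Icc t₀ t₁, 0 ≤ φ t)
    (hI : 0 < ∫ t in t₀..t₁, φ t)
    (hc : c ≥ 1 / (2 * γ ^ 2 * ∫ t in t₀..t₁, φ t))
    (hbpert : ∀ t ∈ Set.Icc t₀ t₁, |bbar t - b| ≤ ρ)
    (hz : ∀ t ∈ Set.Icc t₀ t₁, HasDerivAt zbar (c * (bbar t - zbar t) ^ 3 * φ t) t) :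
    zbar t₁ < b + ρ + γ := by
  have hc0 : 0 < c := lt_of_lt_of_le (by positivity) hc
  have ht₁ : t₁ ∈ Set.Icc t₀ t₁ := ⟨ht.le, le_refl _⟩
  have ht₀ : t₀ ∈ Set.Icc t₀ t₁ := ⟨le_refl _, ht.le⟩
  have hzc : ContinuousOn zbar (Set.Icc t₀ t₁) := fun t htm =>
    ((hz t htm).continuousAt).continuousWithinAt
  by_cases hcase : ∃ s ∈ Set.Icc t₀ t₁, zbar s ≤ b + ρ
  · -- once below the band boundary, stays below
    obtain ⟨s, hs, hsle⟩ := hcase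
    by_contra hcon
    push_neg at hcon
    have h1 : b + ρ < zbar t₁ := by by_contra h; push_neg at h; linarith
    set S : Set ℝ := {u | u ∈ Set.Icc s t₁ ∧ zbar u ≤ b + ρ} with hS
    have hSsub : S ⊆ Set.Icc s t₁ := fun u hu => hu.1
    have hSne : S.Nonempty := ⟨s, ⟨le_refl _, hs.2⟩, hsle⟩
    have hsub2 : Set.Icc s t₁ ⊆ Set.Icc t₀ t₁ := Set.Icc_subset_Icc hs.1 (le_refl _)
    have hSclosed : IsClosed S := by
      have hSeq : S = Set.Icc s t₁ ∩ zbar ⁻¹' Set.Iic (b + ρ) := by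
        ext u; simp [hS, Set.mem_Icc]
      rw [hSeq]
      exact (hzc.mono hsub2).preimage_isClosed_of_isClosed isClosed_Icc isClosed_Iic
    have hScpt : IsCompact S := isCompact_Icc.of_isClosed_subset hSclosed hSsub
    set r : ℝ := sSup S with hr
    have hrS : r ∈ S := hScpt.sSup_mem hSne
    have hrt₁ : r < t₁ := by
      rcases lt_or_eq_of_le hrS.1.2 with h | h
      · exact h
      · exfalso; have := hrS.2; rw [h] at this; linarith
    have hgt : ∀ u ∈ Set.Ioc r t₁, b + ρ < zbar u := by
      intro u hu
      by_contra h; push_neg at h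
      have huS : u ∈ S := ⟨⟨hrS.1.1.trans hu.1.le, hu.2⟩, h⟩
      exact absurd (le_csSup hScpt.bddAbove huS) (not_le.mpr hu.1)
    have hanti : AntitoneOn zbar (Set.Icc r t₁) := by
      have hsubr : Set.Icc r t₁ ⊆ Set.Icc t₀ t₁ :=
        Set.Icc_subset_Icc (hs.1.trans hrS.1.1) (le_refl _)
      apply antitoneOn_of_deriv_nonpos (convex_Icc r t₁) (hzc.mono hsubr)
      · intro x hx
        rw [interior_Icc] at hx
        exact ((hz x (hsubr (Set.mem_Icc_of_Ioo hx))).differentiableAt).differentiableWithinAt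
      · intro x hx
        rw [interior_Icc] at hx
        have hxm : x ∈ Set.Icc t₀ t₁ := hsubr (Set.mem_Icc_of_Ioo hx)
        rw [(hz x hxm).deriv]
        have hbx : bbar x ≤ b + ρ := by
          have := hbpert x hxm; rw [abs_le] at this; linarith [this.2]
        have hzx : b + ρ < zbar x := hgt x ⟨hx.1, hx.2.le⟩
        have hcube : (bbar x - zbar x) ^ 3 ≤ 0 :=
          Odd.pow_nonpos (by decide) (by linarith)
        have hφx := hφpos x hxm
        exact mul_nonpos_of_nonpos_of_nonneg
          (mul_nonpos_of_nonneg_of_nonpos hc0.le hcube) hφx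
    have := hanti ⟨le_refl _, hrt₁.le⟩ ⟨hrt₁.le, le_refl _⟩ hrt₁.le
    linarith [hrS.2]
  · -- always above the band: Lyapunov function 1/(z-(b+ρ))²
    push_neg at hcase
    have hB : ∀ t ∈ Set.Icc t₀ t₁, b + ρ < zbar t := hcase
    set I : ℝ := ∫ t in t₀..t₁, φ t with hIdef
    set W : ℝ → ℝ := fun t => ((zbar t - (b + ρ)) ^ 2)⁻¹ with hWdef
    set G : ℝ → ℝ := fun t => W t - 2 * c * ∫ u in t₀..t, φ u with hGdef
    have hGd : ∀ t ∈ Set.Icc t₀ t₁, HasDerivAt G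
        (-(2 * (zbar t - (b + ρ)) ^ 1 * (c * (bbar t - zbar t) ^ 3 * φ t)) /
          ((zbar t - (b + ρ)) ^ 2) ^ 2 - 2 * c * φ t) t := by
      intro t htm
      have hht : 0 < zbar t - (b + ρ) := by linarith [hB t htm]
      have hsq : HasDerivAt (fun u => (zbar u - (b + ρ)) ^ 2)
          ((2 : ℕ) * (zbar t - (b + ρ)) ^ 1 * (c * (bbar t - zbar t) ^ 3 * φ t)) t :=
        ((hz t htm).sub_const (b + ρ)).pow 2
      have hWd : HasDerivAt W
          (-(2 * (zbar t - (b + ρ)) ^ 1 * (c * (bbar t - zbar t) ^ 3 * φ t)) /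
            ((zbar t - (b + ρ)) ^ 2) ^ 2) t := by
        have := hsq.inv (by positivity)
        simp only [Nat.cast_ofNat] at this
        exact this
      have hint : HasDerivAt (fun u => ∫ x in t₀..u, φ x) (φ t) t :=
        integral_hasDerivAt_right (hφcont.intervalIntegrable t₀ t)
          (hφcont.stronglyMeasurableAtFilter _ _) hφcont.continuousAt
      exact hWd.sub (hint.const_mul (2 * c))
    have hmono : MonotoneOn G (Set.Icc t₀ t₁) := by
      apply monotoneOn_of_deriv_nonneg (convex_Icc t₀ t₁)
      · exact fun t htm => ((hGd t htm).continuousAt).continuousWithinAt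
      · intro x hx
        rw [interior_Icc] at hx
        exact ((hGd x (Set.mem_Icc_of_Ioo hx)).differentiableAt).differentiableWithinAt
      · intro x hx
        rw [interior_Icc] at hx
        have hxm : x ∈ Set.Icc t₀ t₁ := Set.mem_Icc_of_Ioo hx
        rw [(hGd x hxm).deriv]
        have hht : 0 < zbar x - (b + ρ) := by linarith [hB x hxm]
        have hφx := hφpos x hxm
        have hble : bbar x - zbar x ≤ -(zbar x - (b + ρ)) := by
          have := hbpert x hxm; rw [abs_le] at this; linarith [this.2]
        have key : (bbar x - zbar x) ^ 3 ≤ -((zbar x - (b + ρ)) ^ 3) := by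
          have h3 : (bbar x - zbar x) ^ 3 ≤ (-(zbar x - (b + ρ))) ^ 3 :=
            (Odd.strictMono_pow (R := ℝ) (by decide)).monotone hble
          rwa [Odd.neg_pow (by decide)] at h3
        have h4 : (0 : ℝ) < ((zbar x - (b + ρ)) ^ 2) ^ 2 := by positivity
        rw [le_sub_iff_add_le, zero_add, le_div_iff₀ h4]
        have hprod : 2 * c * φ x * (zbar x - (b + ρ)) *
            ((bbar x - zbar x) ^ 3 + (zbar x - (b + ρ)) ^ 3) ≤ 0 :=
          mul_nonpos_of_nonneg_of_nonpos
            (by positivity)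
            (by linarith)
        nlinarith [hprod]
    have hG01 : G t₀ ≤ G t₁ := hmono ht₀ ht₁ ht.le
    have hGt₀ : G t₀ = W t₀ := by simp [hGdef]
    have hWt₀ : 0 < W t₀ := by
      have hd : 0 < zbar t₀ - (b + ρ) := by linarith [hB t₀ ht₀]
      exact inv_pos.mpr (by positivity)
    have hkey2 : 1 / γ ^ 2 ≤ 2 * c * I := by
      have h2I : (0 : ℝ) < 2 * γ ^ 2 * I := by positivity
      have h1 : 1 ≤ c * (2 * γ ^ 2 * I) := (div_le_iff₀ h2I).mp hc
      rw [div_le_iff₀ (by positivity : (0:ℝ) < γ ^ 2)]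
      nlinarith
    have hWt₁ : 1 / γ ^ 2 < W t₁ := by
      have he : G t₁ = W t₁ - 2 * c * I := rfl
      rw [hGt₀, he] at hG01
      linarith
    -- conclude
    have hht₁ : 0 < zbar t₁ - (b + ρ) := by linarith [hB t₁ ht₁]
    by_contra hcon
    push_neg at hcon
    have hγle : γ ≤ zbar t₁ - (b + ρ) := by linarith
    have hsq : γ ^ 2 ≤ (zbar t₁ - (b + ρ)) ^ 2 := by nlinarith
    have : W t₁ ≤ 1 / γ ^ 2 := by
      rw [hWdef, one_div]
      exact inv_anti₀ (by positivity) hsq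
    linarith

open intervalIntegral in
/-- The perturbed targeting estimate: if the target value b of the targeting ODE
is perturbed by at most ρ, the targeting error at arrival time grows by at most ρ. -/
theorem perturbed_targeting (b t₀ t₁ γ ρ c : ℝ) (φ bbar zbar : ℝ → ℝ)
    (ht : t₀ < t₁) (hγ : 0 < γ) (hρ : 0 ≤ ρ)
    (hφcont : Continuous φ) (hφpos : ∀ t ∈ Set.Icc t₀ t₁, 0 ≤ φ t)
    (hI : 0 < ∫ t in t₀..t₁, φ t)
    (hc : c ≥ 1 / (2 * γ ^ 2 * ∫ t in t₀..t₁, φ t))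
    (hbcont : ContinuousOn bbar (Set.Icc t₀ t₁))
    (hbpert : ∀ t ∈ Set.Icc t₀ t₁, |bbar t - b| ≤ ρ)
    (hz : ∀ t ∈ Set.Icc t₀ t₁, HasDerivAt zbar (c * (bbar t - zbar t) ^ 3 * φ t) t) :
    |zbar t₁ - b| < ρ + γ := by
  rw [abs_lt]
  constructor
  · -- lower bound via reflection
    have hupper := perturbed_upper (-b) t₀ t₁ γ ρ c φ (fun t => -bbar t) (fun t => -zbar t)
      ht hγ hρ hφcont hφpos hI hc
      (fun t htm => by simpa [abs_sub_comm, neg_add_eq_sub] using hbpert t htm)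
      (fun t htm => by
        have := (hz t htm).neg
        exact this.congr_deriv (by ring))
    linarith
  · have hupper := perturbed_upper b t₀ t₁ γ ρ c φ bbar zbar
      ht hγ hρ hφcont hφpos hI hc hbpert hz
    linarith
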